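/- If (d₁, d₂, …, d_s) is a sequence of nonnegative integers with Σ_{i=1}^{s} d_i = s − 1, then exactly one of its s cyclic permutations is the preorder degree sequence of a rooted ordered tree on s vertices (the cycle lemma). -/

import Mathlib

/-- Rooted ordered (plane) trees. -/
inductive PTree : Type
  | node : List PTree → PTree

/-- The preorder (depth-first search) degree sequence of a plane tree. -/
def PTree.degSeq : PTree → List ℕ
  | .node ts => ts.length :: (ts.attach.map (fun t => t.1.degSeq)).flatten
decreasing_by
  have := List.sizeOf_lt_of_mem t.2
  simp [PTree.node.sizeOf_spec] at *
  omega

lemma PTree.degSeq_node (ts : List PTree) :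
    (PTree.node ts).degSeq = ts.length :: (ts.map PTree.degSeq).flatten := by
  rw [PTree.degSeq, List.attach_map_val]

/-- A list is a valid preorder degree sequence. -/
def PValid (l : List ℕ) : Prop :=
  l.sum + 1 = l.length ∧ ∀ j < l.length, j ≤ (l.take j).sum

/-- Valid forest of `n` trees -/
def FValid (n : ℕ) (l : List ℕ) : Prop :=
  l.sum + n = l.length ∧ ∀ i < l.length, i < (l.take i).sum + n

lemma fvalid_nil : FValid 0 [] := by constructor <;> simp

lemma fvalid_cons {a l : List ℕ} {n : ℕ} (ha : PValid a) (hl : FValid n l) :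
    FValid (n + 1) (a ++ l) := by
  obtain ⟨ha1, ha2⟩ := ha
  obtain ⟨hl1, hl2⟩ := hl
  constructor
  · simp only [List.sum_append, List.length_append]; omega
  · intro i hi
    rw [List.take_append, List.sum_append]
    rcases lt_or_ge i a.length with h | h
    · have := ha2 i h
      have hz : i - a.length = 0 := by omega
      rw [hz]
      simp only [List.take_zero, List.sum_nil]
      omega
    · have hia : a.take i = a := List.take_of_length_le h
      rw [hia]
      have := hl2 (i - a.length) (by simp at hi; omega)
      omega

lemma pvalid_of_fvalid {d : ℕ} {F : List ℕ} (h : FValid d F) : PValid (d :: F) := by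
  obtain ⟨h1, h2⟩ := h
  constructor
  · simp; omega
  · intro j hj
    cases j with
    | zero => simp
    | succ i =>
      simp only [List.length_cons] at hj
      have := h2 i (by omega)
      simp only [List.take_succ_cons, List.sum_cons]
      omega

lemma fvalid_flatten : ∀ (L : List (List ℕ)), (∀ x ∈ L, PValid x) → FValid L.length L.flatten := by
  intro L
  induction L with
  | nil => intro _; simpa using fvalid_nil
  | cons a L ih =>
    intro h
    have := fvalid_cons (h a (by simp)) (ih (fun x hx => h x (by simp [hx])))
    simpa using this

lemma pvalid_degSeq : ∀ tr : PTree, PValid tr.degSeq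
  | .node ts => by
    have IH : ∀ t ∈ ts, PValid t.degSeq := fun t ht => pvalid_degSeq t
    rw [PTree.degSeq_node]
    have := fvalid_flatten (ts.map PTree.degSeq) (by
      intro x hx
      rw [List.mem_map] at hx
      obtain ⟨t, ht, rfl⟩ := hx
      exact IH t ht)
    rw [List.length_map] at this
    exact pvalid_of_fvalid this
termination_by tr => sizeOf tr
decreasing_by
  have := List.sizeOf_lt_of_mem ht
  simp [PTree.node.sizeOf_spec] at *
  omega

/-- discrete IVT -/
lemma ivt (f : ℕ → ℕ) (hf0 : f 0 = 0) (hstep : ∀ i, f (i + 1) ≤ f i + 1) :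
    ∀ n, ∀ v ≤ f n, ∃ j ≤ n, f j = v := by
  intro n
  induction n with
  | zero => intro v hv; exact ⟨0, le_refl 0, by omega⟩
  | succ n ih =>
    intro v hv
    rcases le_or_gt v (f n) with h | h
    · obtain ⟨j, hj, hfj⟩ := ih v h
      exact ⟨j, by omega, hfj⟩
    · have := hstep n
      exact ⟨n + 1, le_refl _, by omega⟩

lemma exists_tree : ∀ s : ℕ, ∀ l : List ℕ, l.length = s → PValid l →
    ∃ tr : PTree, tr.degSeq = l := by
  intro s
  induction s using Nat.strong_induction_on with
  | _ s IH =>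
    intro l hlen hval
    obtain ⟨hsum, hpre⟩ := hval
    match l with
    | [] => simp at hsum
    | d :: rest =>
      rcases Nat.eq_zero_or_pos d with hd | hd
      · -- d = 0 : must be singleton
        subst hd
        have hrest : rest = [] := by
          by_contra hne
          have hlen1 : 1 < (0 :: rest).length := by
            simp [List.length_pos_iff.mpr hne]
          have := hpre 1 hlen1
          simp at this
        subst hrest
        exact ⟨PTree.node [], by rw [PTree.degSeq_node]; simp⟩
      · -- d ≥ 1
        classical
        set f : ℕ → ℕ := fun j => j - (rest.take j).sum with hf
        have hf0 : f 0 = 0 := by simp [hf]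
        have hsummono : ∀ i, (rest.take i).sum ≤ (rest.take (i+1)).sum := by
          intro i
          rw [List.take_succ]
          simp
        have hstep : ∀ i, f (i + 1) ≤ f i + 1 := by
          intro i
          simp only [hf]
          have := hsummono i
          omega
        have hrl : rest.length = s - 1 := by simp at hlen; omega
        have hrsum : rest.sum + d = rest.length := by
          simp only [List.sum_cons, List.length_cons] at hsum hlen
          omega
        have hfn : f rest.length = d := by
          simp only [hf, List.take_length]
          omega
        have hex : ∃ j, j ≤ rest.length ∧ f j = 1 := by
          obtain ⟨j, hj1, hj2⟩ := ivt f hf0 hstep rest.length 1 (by omega)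
          exact ⟨j, hj1, hj2⟩
        set j₀ := Nat.find hex with hj₀def
        obtain ⟨hj₀le, hj₀⟩ : j₀ ≤ rest.length ∧ f j₀ = 1 := Nat.find_spec hex
        have hjmin : ∀ i < j₀, f i = 0 := by
          intro i hi
          induction i with
          | zero => exact hf0
          | succ k ihk =>
            have hk := ihk (by omega)
            have := hstep k
            have hne : f (k+1) ≠ 1 := by
              intro hone
              have := Nat.find_min hex (m := k + 1) hi
              exact this ⟨by omega, hone⟩
            omega
        have hj₀pos : 1 ≤ j₀ := by
          by_contra h
          have hz : j₀ = 0 := by omega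
          rw [hz, hf0] at hj₀
          omega
        have hsumle : ∀ i, (rest.take i).sum ≤ rest.sum := by
          intro i
          conv_rhs => rw [← List.take_append_drop i rest]
          rw [List.sum_append]
          omega
        have hs1 : (rest.take j₀).sum + 1 = j₀ := by
          simp only [hf] at hj₀
          have := hsumle j₀
          -- need (take j₀).sum < j₀ : since j₀ - sum = 1
          rcases Nat.lt_or_ge (rest.take j₀).sum j₀ with h | h
          · omega
          · omega
        have hval1 : PValid (rest.take j₀) := by
          constructor
          · rw [List.length_take, min_eq_left hj₀le]; exact hs1
          · intro i hi
            rw [List.length_take, min_eq_left hj₀le] at hi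
            rw [List.take_take, min_eq_left (le_of_lt hi)]
            have h0 := hjmin i hi
            simp only [hf] at h0
            have hle : i ≤ (rest.take i).sum ∨ (rest.take i).sum < i := by omega
            rcases hle with h | h
            · exact h
            · omega
        have hlen1 : (rest.take j₀).length = j₀ := by
          rw [List.length_take, min_eq_left hj₀le]
        have hj₀lt : j₀ < s := by omega
        obtain ⟨c, hc⟩ := IH j₀ hj₀lt (rest.take j₀) hlen1 hval1
        have hval2 : PValid ((d - 1) :: rest.drop j₀) := by
          constructor
          · simp only [List.sum_cons, List.length_cons, List.length_drop]
            have hsp : (rest.take j₀).sum + (rest.drop j₀).sum = rest.sum := by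
              rw [← List.sum_append, List.take_append_drop]
            omega
          · intro j hj
            cases j with
            | zero => simp
            | succ m =>
              simp only [List.length_cons, List.length_drop] at hj
              simp only [List.take_succ_cons, List.sum_cons]
              have hm : 1 + j₀ + m < s := by omega
              have hp := hpre (1 + j₀ + m) (by rw [hlen]; exact hm)
              have htk : ((d :: rest).take (1 + j₀ + m)).sum
                  = d + ((rest.take j₀).sum + ((rest.drop j₀).take m).sum) := by
                have he : (1 : ℕ) + j₀ + m = (j₀ + m) + 1 := by ring
                rw [he]
                simp only [List.take_succ_cons, List.sum_cons]
                rw [List.take_add, List.sum_append]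
              rw [htk] at hp
              omega
        have hlen2 : ((d - 1) :: rest.drop j₀).length = s - j₀ := by
          simp only [List.length_cons, List.length_drop]
          omega
        obtain ⟨tr', htr'⟩ := IH (s - j₀) (by omega) _ hlen2 hval2
        obtain ⟨ts'⟩ := tr'
        rw [PTree.degSeq_node] at htr'
        have hts'len : ts'.length = d - 1 := by
          injection htr'
        have hts'flat : (ts'.map PTree.degSeq).flatten = rest.drop j₀ := by
          injection htr' with h1 h2
        refine ⟨PTree.node (c :: ts'), ?_⟩
        rw [PTree.degSeq_node]
        simp only [List.length_cons, List.map_cons, List.flatten_cons]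
        rw [hc, hts'flat, hts'len]
        have hd1 : d - 1 + 1 = d := by omega
        rw [hd1]
        congr 1
        exact List.take_append_drop j₀ rest

section CycleLemma

variable (l : List ℕ)

/-- Prefix sums of `l ++ l`. -/
def Sf (t : ℕ) : ℕ := (((l ++ l)).take t).sum

def Gf (t : ℕ) : ℤ := (Sf l t : ℤ) - t

lemma rotate_take_eq {t j : ℕ} (ht : t ≤ l.length) (hj : j ≤ l.length) :
    (l.rotate t).take j = ((l ++ l).drop t).take j := by
  rw [List.rotate_eq_drop_append_take ht, List.drop_append,
    Nat.sub_eq_zero_of_le ht, List.drop_zero]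
  rw [List.take_append, List.take_append]
  congr 1
  rw [List.take_take]
  congr 1
  simp only [List.length_drop]
  omega

lemma Sf_add {t j : ℕ} (ht : t ≤ l.length) (hj : j ≤ l.length) :
    Sf l (t + j) = Sf l t + ((l.rotate t).take j).sum := by
  rw [rotate_take_eq l ht hj, Sf, Sf, List.take_add, List.sum_append]

lemma Gf_shift {i : ℕ} (hi : i ≤ l.length) :
    Gf l (i + l.length) = Gf l i + (l.sum : ℤ) - l.length := by
  have h1 : Sf l (i + l.length) = l.sum + Sf l i := by
    rw [Sf, add_comm i l.length, List.take_length_add_append, List.sum_append, Sf,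
      List.take_append_of_le_length hi]
  simp only [Gf, h1]
  push_cast
  ring

end CycleLemma

lemma pvalid_rotate_iff (s : ℕ) (l : List ℕ) (hl : l.length = s)
    (hsum : l.sum + 1 = s) (t : ℕ) (ht : t < s) :
    PValid (l.rotate t) ↔ ∀ j < s, Gf l t ≤ Gf l (t + j) := by
  have hlen : (l.rotate t).length = s := by rw [List.length_rotate, hl]
  have hsum' : (l.rotate t).sum = l.sum := (List.rotate_perm l t).sum_eq
  constructor
  · rintro ⟨_, h2⟩ j hj
    have h3 := h2 j (by omega)
    have hadd := Sf_add l (t := t) (j := j) (by omega) (by omega)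
    simp only [Gf]
    omega
  · intro h
    refine ⟨by omega, ?_⟩
    intro j hj
    rw [hlen] at hj
    have h3 := h j hj
    have hadd := Sf_add l (t := t) (j := j) (by omega) (by omega)
    simp only [Gf] at h3
    omega

theorem cycle_lemma (s : ℕ) (hs : 1 ≤ s) (l : List ℕ) (hl : l.length = s)
    (hsum : l.sum + 1 = s) :
    ∃! t : Fin s, ∃ tr : PTree, tr.degSeq = l.rotate t := by
  classical
  have hshift : ∀ i ≤ s, Gf l (i + s) = Gf l i - 1 := by
    intro i hi
    have h1 := Gf_shift l (i := i) (by omega)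
    rw [hl] at h1
    rw [h1]
    have h2 : (l.sum : ℤ) = (s : ℤ) - 1 := by
      have := hsum
      omega
    rw [h2]
    ring
  have hexmin : ∃ t, t < s ∧ ∀ i < s, Gf l t ≤ Gf l i := by
    obtain ⟨b, hb, hmin⟩ := Finset.exists_min_image (Finset.range s) (Gf l)
      ⟨0, Finset.mem_range.mpr (by omega)⟩
    exact ⟨b, Finset.mem_range.mp hb, fun i hi => hmin i (Finset.mem_range.mpr hi)⟩
  set t₀ := Nat.find hexmin with ht₀def
  obtain ⟨ht₀lt, ht₀min⟩ : t₀ < s ∧ ∀ i < s, Gf l t₀ ≤ Gf l i := Nat.find_spec hexmin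
  have hC : ∀ j < s, Gf l t₀ ≤ Gf l (t₀ + j) := by
    intro j hj
    rcases lt_or_ge (t₀ + j) s with h | h
    · exact ht₀min _ h
    · have hi : t₀ + j - s < t₀ := by omega
      have heq : t₀ + j = (t₀ + j - s) + s := by omega
      rw [heq, hshift _ (by omega)]
      have hni := Nat.find_min hexmin hi
      push_neg at hni
      obtain ⟨k, hk, hklt⟩ := hni (by omega)
      have h4 := ht₀min k hk
      have h5 : Gf l k + 1 ≤ Gf l (t₀ + j - s) := hklt
      linarith
  -- uniqueness of the condition
  have huniq : ∀ t t' : ℕ, t < t' → t' < s →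
      (∀ j < s, Gf l t ≤ Gf l (t + j)) → (∀ j < s, Gf l t' ≤ Gf l (t' + j)) → False := by
    intro t t' htt' ht's hCt hCt'
    have h1 : Gf l t ≤ Gf l t' := by
      have := hCt (t' - t) (by omega)
      have he : t + (t' - t) = t' := by omega
      rwa [he] at this
    have h2 : Gf l t' ≤ Gf l (t + s) := by
      have := hCt' (t + s - t') (by omega)
      have he : t' + (t + s - t') = t + s := by omega
      rwa [he] at this
    rw [hshift t (by omega)] at h2
    linarith
  refine ⟨⟨t₀, ht₀lt⟩, ?_, ?_⟩
  · -- existence of tree for rotation t₀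
    have hv : PValid (l.rotate t₀) := (pvalid_rotate_iff s l hl hsum t₀ ht₀lt).mpr hC
    exact exists_tree s (l.rotate t₀) (by rw [List.length_rotate, hl]) hv
  · rintro ⟨t, htlt⟩ ⟨tr, htr⟩
    have hv : PValid (l.rotate t) := htr ▸ pvalid_degSeq tr
    have hCt := (pvalid_rotate_iff s l hl hsum t htlt).mp hv
    have : t = t₀ := by
      rcases lt_trichotomy t t₀ with h | h | h
      · exact absurd (huniq t t₀ h ht₀lt hCt hC) (fun x => x)
      · exact h
      · exact absurd (huniq t₀ t h htlt hC hCt) (fun x => x)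
    exact Fin.ext this
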